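/- Let n ≥ 1 and d < n. For every affine subspace V of F_2^n of dimension k with k ≥ 2d, the complement of the Hamming ball satisfies |V ∩ {x : |x|_H > d}| ≥ 2^k − ∑_{a=0}^{d} binom(k, a). -/

import Mathlib

open Finset

/-- An "information set": a set of at most `k` coordinates on which a `k`-dimensional
subspace of `F_2^n` is determined. -/
lemma aux_exists_infoset (k : ℕ) : ∀ (n : ℕ) (W : Submodule (ZMod 2) (Fin n → ZMod 2)),
    Module.finrank (ZMod 2) W ≤ k → ∃ S : Finset (Fin n), S.card ≤ k ∧
      ∀ x ∈ W, (∀ i ∈ S, x i = 0) → x = 0 := by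
  induction k with
  | zero =>
    intro n W hW
    refine ⟨∅, le_refl _, ?_⟩
    have hbot : W = ⊥ := Submodule.finrank_eq_zero.mp (Nat.le_zero.mp hW)
    intro x hx _
    simpa [hbot] using hx
  | succ k ih =>
    intro n W hW
    by_cases hbot : W = ⊥
    · exact ⟨∅, Nat.zero_le _, fun x hx _ => by simpa [hbot] using hx⟩
    · obtain ⟨w, hwW, hw0⟩ := (Submodule.ne_bot_iff W).mp hbot
      obtain ⟨i, hi⟩ : ∃ i, w i ≠ 0 := by
        by_contra h; push_neg at h; exact hw0 (funext h)
      set W' := W ⊓ LinearMap.ker (LinearMap.proj (R := ZMod 2)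
        (φ := fun _ : Fin n => ZMod 2) i) with hW'def
      have hwW' : w ∉ W' := by
        intro hmem
        exact hi (by simpa using hmem.2)
      have hlt : W' < W := lt_of_le_of_ne inf_le_left (fun h => hwW' (h ▸ hwW))
      have hfr : Module.finrank (ZMod 2) W' ≤ k := by
        have := Submodule.finrank_lt_finrank_of_lt hlt
        omega
      obtain ⟨S', hS'c, hS'⟩ := ih n W' hfr
      refine ⟨insert i S', (Finset.card_insert_le _ _).trans (by omega), ?_⟩
      intro x hx hz
      have hxi : x i = 0 := hz i (Finset.mem_insert_self _ _)
      have hx' : x ∈ W' := ⟨hx, by simpa using hxi⟩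
      exact hS' x hx' (fun j hj => hz j (Finset.mem_insert_of_mem hj))

/-- For an affine subspace `V` of dimension `k ≥ 2d` in `F_2^n` (with `d < n ≥ 1`),
`|V ∩ {x : |x|_H > d}| ≥ 2^k - ∑_{a=0}^d C(k,a)`. -/
theorem stmt17 (n d k : ℕ) (hn : 1 ≤ n) (hd : d < n) (hk : 2 * d ≤ k)
    (W : Submodule (ZMod 2) (Fin n → ZMod 2)) (hW : Module.finrank (ZMod 2) W = k)
    (v : Fin n → ZMod 2) :
    2 ^ k - ∑ a ∈ Finset.range (d + 1), Nat.choose k a ≤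
      Nat.card {x : Fin n → ZMod 2 | (∃ w ∈ W, x = v + w) ∧ d < hammingNorm x} := by
  classical
  obtain ⟨S, hSk, hSinj⟩ := aux_exists_infoset k n W (le_of_eq hW)
  set P : Set (Fin n → ZMod 2) := {x | ∃ w ∈ W, x = v + w} with hPdef
  set B : Set (Fin n → ZMod 2) := {x | hammingNorm x ≤ d} with hBdef
  -- |P| = 2^k
  have hcardW : Nat.card W = 2 ^ k := by
    have h1 : Fintype.card W = Fintype.card (ZMod 2) ^ Module.finrank (ZMod 2) W :=
      Module.card_eq_pow_finrank
    rw [Nat.card_eq_fintype_card, h1, ZMod.card, hW]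
  have himg : P = (fun w => v + w) '' (W : Set (Fin n → ZMod 2)) := by
    ext x
    simp only [hPdef, Set.mem_setOf_eq, Set.mem_image, SetLike.mem_coe]
    constructor
    · rintro ⟨w, hw, rfl⟩; exact ⟨w, hw, rfl⟩
    · rintro ⟨w, hw, rfl⟩; exact ⟨w, hw, rfl⟩
  have hcardP : P.ncard = 2 ^ k := by
    rw [himg, Set.ncard_image_of_injective _ (add_right_injective v),
      ← Nat.card_coe_set_eq]
    exact hcardW
  -- injection of P ∩ B into small subsets of S
  set g : (Fin n → ZMod 2) → Finset (Fin n) := fun x => S.filter (fun i => x i ≠ 0) with hgdef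
  have hval : ∀ a b : ZMod 2, (a ≠ 0 ↔ b ≠ 0) → a = b := by decide
  have hginj : Set.InjOn g P := by
    rintro x ⟨w, hw, rfl⟩ x' ⟨w', hw', rfl⟩ hgx
    have hSeq : ∀ i ∈ S, (v + w) i = (v + w') i := by
      intro i hiS
      apply hval
      constructor
      · intro h
        have : i ∈ g (v + w) := Finset.mem_filter.mpr ⟨hiS, h⟩
        rw [hgx] at this
        exact (Finset.mem_filter.mp this).2
      · intro h
        have : i ∈ g (v + w') := Finset.mem_filter.mpr ⟨hiS, h⟩
        rw [← hgx] at this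
        exact (Finset.mem_filter.mp this).2
    have hsub : (v + w) - (v + w') ∈ W := by
      have : (v + w) - (v + w') = w - w' := by ring
      rw [this]; exact sub_mem hw hw'
    have hzero : (v + w) - (v + w') = 0 := by
      apply hSinj _ hsub
      intro i hiS
      simp only [Pi.sub_apply]
      rw [hSeq i hiS, sub_self]
    exact sub_eq_zero.mp hzero
  set D : Finset (Finset (Fin n)) := S.powerset.filter (fun s => s.card ≤ d) with hDdef
  have hgD : ∀ x ∈ P ∩ B, g x ∈ D := by
    rintro x ⟨hxP, hxB⟩
    rw [hDdef, Finset.mem_filter, Finset.mem_powerset]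
    refine ⟨Finset.filter_subset _ _, ?_⟩
    have : g x ⊆ Finset.univ.filter (fun i => x i ≠ 0) := by
      intro i hi
      simp only [Finset.mem_filter, Finset.mem_univ, true_and]
      exact (Finset.mem_filter.mp hi).2
    calc (g x).card ≤ (Finset.univ.filter (fun i => x i ≠ 0)).card :=
          Finset.card_le_card this
      _ = hammingNorm x := rfl
      _ ≤ d := hxB
  have hDcard : D.card ≤ ∑ a ∈ Finset.range (d + 1), Nat.choose k a := by
    have hsub : D ⊆ (Finset.range (d + 1)).biUnion (fun a => Finset.powersetCard a S) := by
      intro s hs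
      rw [hDdef, Finset.mem_filter, Finset.mem_powerset] at hs
      exact Finset.mem_biUnion.mpr ⟨s.card, Finset.mem_range.mpr (by omega),
        Finset.mem_powersetCard.mpr ⟨hs.1, rfl⟩⟩
    calc D.card ≤ _ := Finset.card_le_card hsub
      _ ≤ ∑ a ∈ Finset.range (d + 1), (Finset.powersetCard a S).card :=
          Finset.card_biUnion_le
      _ = ∑ a ∈ Finset.range (d + 1), Nat.choose S.card a := by
          simp [Finset.card_powersetCard]
      _ ≤ ∑ a ∈ Finset.range (d + 1), Nat.choose k a :=
          Finset.sum_le_sum (fun a _ => Nat.choose_le_choose a hSk)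
  have hPB : (P ∩ B).ncard ≤ ∑ a ∈ Finset.range (d + 1), Nat.choose k a := by
    have h1 : (P ∩ B).ncard = (g '' (P ∩ B)).ncard :=
      (Set.ncard_image_of_injOn (hginj.mono Set.inter_subset_left)).symm
    have h2 : g '' (P ∩ B) ⊆ (D : Set (Finset (Fin n))) := by
      rintro s ⟨x, hx, rfl⟩
      exact hgD x hx
    calc (P ∩ B).ncard = (g '' (P ∩ B)).ncard := h1
      _ ≤ (D : Set (Finset (Fin n))).ncard := Set.ncard_le_ncard h2 (Set.toFinite _)
      _ = D.card := Set.ncard_coe_finset D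
      _ ≤ _ := hDcard
  -- final accounting
  have hTeq : {x : Fin n → ZMod 2 | (∃ w ∈ W, x = v + w) ∧ d < hammingNorm x} = P \ B := by
    ext x
    simp [hPdef, hBdef, Set.mem_diff, not_le]
  rw [hTeq, Nat.card_coe_set_eq]
  have hdiff : P \ B = P \ (P ∩ B) := by
    rw [Set.diff_self_inter]
  rw [hdiff, Set.ncard_diff Set.inter_subset_left (Set.toFinite _), hcardP]
  omega
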